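/- In the quotient ring Γ̄ = Ā[r]/(q(r)), the image of η_R(a_3^5 + 2a_2^3a_3^3 + a_2^4a_3a_4) equals the image of a_3^5 + 2a_2^3a_3^3 + a_2^4a_3a_4; i.e. the element a_3^5 + 2a_2^3a_3^3 + a_2^4a_3a_4 is invariant modulo the relation q(r) = 0. -/

import Mathlib

/-!
`Abar = 𝔽_5[a_2,a_3,a_4]` (the variable `0,1,2 : Fin 3` are `a_2, a_3, a_4`),
`q(t) = t^5 + a_2t^3 + a_3t^2 + a_4t`, and `etaR : Abar → Abar[r]` is the
𝔽_5-algebra map sending `a_i` to the coefficient of `x^{5-i}` in `q(x+r) - q(r)`,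
computed in `Abar[r][x]`.  This is the reduction modulo `(5, a_1, a_5)` of the
Gorbounov–Hopkins–Mahowald Hopf algebroid at the prime `5`.
-/

/-- The ring `Ā = 𝔽_5[a_2,a_3,a_4]`. -/
abbrev Abar : Type := MvPolynomial (Fin 3) (ZMod 5)

/-- The generator `a_2`. -/
noncomputable def a2 : Abar := MvPolynomial.X 0
/-- The generator `a_3`. -/
noncomputable def a3 : Abar := MvPolynomial.X 1
/-- The generator `a_4`. -/
noncomputable def a4 : Abar := MvPolynomial.X 2

/-- The polynomial `q(t) = t^5 + a_2t^3 + a_3t^2 + a_4t` as an element of `Ā[t]`. -/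
noncomputable def q : Polynomial Abar :=
  Polynomial.X ^ 5 + Polynomial.C a2 * Polynomial.X ^ 3 + Polynomial.C a3 * Polynomial.X ^ 2 +
    Polynomial.C a4 * Polynomial.X

/-- `q(x+r) - q(r)`, an element of `Ā[r][x]` (the inner variable is `r`, the outer is `x`). -/
noncomputable def qShift : Polynomial (Polynomial Abar) :=
  Polynomial.eval₂ (Polynomial.C.comp Polynomial.C)
      (Polynomial.X + Polynomial.C Polynomial.X) q -
    Polynomial.eval₂ (Polynomial.C.comp Polynomial.C) (Polynomial.C Polynomial.X) q

/-- The right unit `η_R : Ā → Ā[r]`, sending `a_i` (for `i = 2,3,4`) to the coefficient of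
`x^{5-i}` in `q(x+r) - q(r)`. -/
noncomputable def etaR : Abar →ₐ[ZMod 5] Polynomial Abar :=
  MvPolynomial.aeval (fun k : Fin 3 => qShift.coeff (3 - k.1))


set_option synthInstance.maxHeartbeats 400000 in
lemma h5 : (5 : Polynomial Abar) = 0 := by exact_mod_cast CharP.cast_eq_zero (Polynomial Abar) 5

lemma qShift_eq : qShift =
    Polynomial.X ^ 5 + Polynomial.C (5 * Polynomial.X) * Polynomial.X ^ 4
    + Polynomial.C (10 * Polynomial.X ^ 2 + Polynomial.C a2) * Polynomial.X ^ 3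
    + Polynomial.C (10 * Polynomial.X ^ 3 + 3 * Polynomial.C a2 * Polynomial.X + Polynomial.C a3) * Polynomial.X ^ 2
    + Polynomial.C (5 * Polynomial.X ^ 4 + 3 * Polynomial.C a2 * Polynomial.X ^ 2
        + 2 * Polynomial.C a3 * Polynomial.X + Polynomial.C a4) * Polynomial.X := by
  simp only [qShift, q, Polynomial.eval₂_add, Polynomial.eval₂_mul, Polynomial.eval₂_pow,
    Polynomial.eval₂_X, Polynomial.eval₂_C, RingHom.coe_comp, Function.comp_apply, map_add, map_mul,
    map_pow, map_ofNat, Polynomial.eval₂_mul (S := Polynomial (Polynomial Abar)),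
    Polynomial.eval₂_pow (S := Polynomial (Polynomial Abar))]
  ring

set_option synthInstance.maxHeartbeats 400000 in
lemma etaR_a2 : etaR a2 = Polynomial.C a2 := by
  have : etaR a2 = qShift.coeff 3 := by simp [etaR, a2]
  rw [this, qShift_eq]
  simp only [Polynomial.coeff_add, Polynomial.coeff_C_mul, Polynomial.coeff_X_pow,
    Polynomial.coeff_X, Polynomial.coeff_X_one]
  norm_num [Polynomial.coeff_one]
  linear_combination (2 * Polynomial.X ^ 2 : Polynomial Abar) * h5

set_option synthInstance.maxHeartbeats 400000 in
lemma etaR_a3 : etaR a3 = Polynomial.C a3 + 3 * Polynomial.C a2 * Polynomial.X := by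
  have : etaR a3 = qShift.coeff 2 := by simp [etaR, a3]
  rw [this, qShift_eq]
  simp only [Polynomial.coeff_add, Polynomial.coeff_C_mul, Polynomial.coeff_X_pow,
    Polynomial.coeff_X]
  norm_num [Polynomial.coeff_one]
  linear_combination (2 * Polynomial.X ^ 3 : Polynomial Abar) * h5

set_option synthInstance.maxHeartbeats 400000 in
lemma etaR_a4 : etaR a4 = Polynomial.C a4 + 2 * Polynomial.C a3 * Polynomial.X
    + 3 * Polynomial.C a2 * Polynomial.X ^ 2 := by
  have : etaR a4 = qShift.coeff 1 := by simp [etaR, a4]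
  rw [this, qShift_eq]
  simp only [Polynomial.coeff_add, Polynomial.coeff_C_mul, Polynomial.coeff_X_pow,
    Polynomial.coeff_X, Polynomial.coeff_X_one]
  norm_num [Polynomial.coeff_one]
  linear_combination (Polynomial.X ^ 4 : Polynomial Abar) * h5

/-- In `Γ̄ = Ā[r]/(q(r))`, the image of `η_R(a_3^5 + 2a_2^3a_3^3 + a_2^4a_3a_4)` equals the
image of `a_3^5 + 2a_2^3a_3^3 + a_2^4a_3a_4` (here `q = q(r) ∈ Ā[r]`). -/
theorem a35_invariant_mod_q :
    Ideal.Quotient.mk (Ideal.span {q}) (etaR (a3 ^ 5 + 2 * a2 ^ 3 * a3 ^ 3 + a2 ^ 4 * a3 * a4)) =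
      Ideal.Quotient.mk (Ideal.span {q})
        (Polynomial.C (a3 ^ 5 + 2 * a2 ^ 3 * a3 ^ 3 + a2 ^ 4 * a3 * a4)) := by
  rw [Ideal.Quotient.eq, Ideal.mem_span_singleton]
  refine ⟨3 * Polynomial.C a2 ^ 5, ?_⟩
  simp only [map_add, map_mul, map_pow, map_ofNat, etaR_a2, etaR_a3, etaR_a4, q]
  linear_combination ((3:Polynomial Abar) * Polynomial.C a2 * Polynomial.C a3^4 * Polynomial.X
    + 18 * Polynomial.C a2^2 * Polynomial.C a3^3 * Polynomial.X^2
    + 54 * Polynomial.C a2^3 * Polynomial.C a3^2 * Polynomial.X^3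
    + 81 * Polynomial.C a2^4 * Polynomial.C a3 * Polynomial.X^4
    + 4 * Polynomial.C a2^4 * Polynomial.C a3^2 * Polynomial.X
    + 48 * Polynomial.C a2^5 * Polynomial.X^5
    + 12 * Polynomial.C a2^5 * Polynomial.C a3 * Polynomial.X^2
    + 12 * Polynomial.C a2^6 * Polynomial.X^3) * h5
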